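/- Let s > 1/2 and let α ∈ (0, min(1, s − 1/2)). Then there exists a constant C = C(s,α) > 0 such that for every measurable h : ℝ → ℂ with (1+y²)^{s/2} h ∈ L²(ℝ), the Fourier transform ĥ(k) = ∫_ℝ e^{−iky} h(y) dy satisfies |ĥ(k) − ĥ(k')| ≤ C ‖(1+y²)^{s/2} h‖_{L²(ℝ)} |k − k'|^α for all k, k' ∈ ℝ with |k − k'| ≤ 1. -/

import Mathlib

open MeasureTheory Filter Set
open scoped ENNReal NNReal

lemma exp_diff_bound {α : ℝ} (hα0 : 0 < α) (hα1 : α ≤ 1) (k k' y : ℝ) :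
    ‖Complex.exp (-Complex.I * (k : ℂ) * (y : ℂ)) - Complex.exp (-Complex.I * (k' : ℂ) * (y : ℂ))‖
      ≤ 2 * (|k - k'| * |y|) ^ α := by
  set t : ℝ := |k - k'| * |y| with ht
  have ht0 : 0 ≤ t := mul_nonneg (abs_nonneg _) (abs_nonneg _)
  have key : Complex.exp (-Complex.I * (k : ℂ) * (y : ℂ))
      - Complex.exp (-Complex.I * (k' : ℂ) * (y : ℂ))
      = Complex.exp (-Complex.I * (k' : ℂ) * (y : ℂ))
        * (Complex.exp (-Complex.I * ((k : ℂ) - (k' : ℂ)) * (y : ℂ)) - 1) := by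
    rw [mul_sub, mul_one, ← Complex.exp_add]
    ring_nf
  have habs1 : ∀ t' : ℝ, ‖Complex.exp (-Complex.I * (t' : ℂ) * (y : ℂ))‖ = 1 := by
    intro t'
    rw [Complex.norm_exp]
    simp [Complex.mul_re]
  have habsz : ‖(-Complex.I * ((k : ℂ) - (k' : ℂ)) * (y : ℂ))‖ = t := by
    rw [norm_mul, norm_mul]
    simp [← Complex.ofReal_sub, abs_sub_comm, ht]
  have htα : min 1 t ≤ t ^ α := by
    rcases le_or_gt t 1 with h1 | h1
    · rcases eq_or_lt_of_le ht0 with h0 | h0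
      · simp [← h0, Real.zero_rpow hα0.ne']
      · calc min 1 t ≤ t := min_le_right _ _
          _ = t ^ (1 : ℝ) := (Real.rpow_one t).symm
          _ ≤ t ^ α := Real.rpow_le_rpow_of_exponent_ge h0 h1 hα1
    · calc min 1 t ≤ 1 := min_le_left _ _
        _ ≤ t ^ α := Real.one_le_rpow h1.le hα0.le
  rw [key, norm_mul, habs1, one_mul]
  rcases le_or_gt t 1 with h1 | h1
  · have := Complex.norm_exp_sub_one_le (x := -Complex.I * ((k : ℂ) - (k' : ℂ)) * (y : ℂ))
      (by rw [habsz]; exact h1)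
    rw [habsz] at this
    calc ‖Complex.exp (-Complex.I * ((k : ℂ) - (k' : ℂ)) * (y : ℂ)) - 1‖ ≤ 2 * t := this
      _ = 2 * min 1 t := by rw [min_eq_right h1]
      _ ≤ 2 * t ^ α := by linarith [htα]
  · have h2 : ‖Complex.exp (-Complex.I * ((k : ℂ) - (k' : ℂ)) * (y : ℂ)) - 1‖ ≤ 2 := by
      refine (norm_sub_le _ _).trans ?_
      have : ‖Complex.exp (-Complex.I * ((k : ℂ) - (k' : ℂ)) * (y : ℂ))‖ = 1 := by
        rw [Complex.norm_exp]
        simp [Complex.mul_re]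
      rw [this]; norm_num
    calc ‖Complex.exp (-Complex.I * ((k : ℂ) - (k' : ℂ)) * (y : ℂ)) - 1‖ ≤ 2 := h2
      _ = 2 * min 1 t := by rw [min_eq_left h1.le]; ring
      _ ≤ 2 * t ^ α := by linarith [htα]

lemma weight_memL2 {s : ℝ} (hs : 1 / 2 < s) :
    MemLp (fun y : ℝ => (((1 + y ^ 2) ^ (s / 2) : ℝ))⁻¹) 2 volume := by
  have hmeas : Measurable fun y : ℝ => (((1 + y ^ 2) ^ (s / 2) : ℝ))⁻¹ := by fun_prop
  rw [memLp_two_iff_integrable_sq hmeas.aestronglyMeasurable]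
  have hint : Integrable (fun y : ℝ => ((1 : ℝ) + ‖y‖ ^ 2) ^ (-(2 * s) / 2)) volume :=
    integrable_rpow_neg_one_add_norm_sq (by simp; linarith)
  refine hint.congr (Filter.Eventually.of_forall fun y => ?_)
  have hpos : (0 : ℝ) < 1 + y ^ 2 := by positivity
  have h2 : ((((1 + y ^ 2) ^ (s / 2) : ℝ))⁻¹) ^ 2 = (1 + y ^ 2) ^ (-s) := by
    rw [← Real.rpow_neg hpos.le, ← Real.rpow_natCast ((1 + y ^ 2) ^ (-(s / 2))) 2,
      ← Real.rpow_mul hpos.le]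
    push_cast; ring_nf
  show ((1 : ℝ) + ‖y‖ ^ 2) ^ (-(2 * s) / 2) = (((1 + y ^ 2) ^ (s / 2) : ℝ))⁻¹ ^ 2
  rw [h2, Real.norm_eq_abs, sq_abs]
  congr 1; ring

lemma psi_memL2 {s α : ℝ} (hα0 : 0 < α) (hαs : α < s - 1 / 2) :
    MemLp (fun y : ℝ => |y| ^ α * (((1 + y ^ 2) ^ (s / 2) : ℝ))⁻¹) 2 volume := by
  have hmeas : Measurable fun y : ℝ => |y| ^ α * (((1 + y ^ 2) ^ (s / 2) : ℝ))⁻¹ := by fun_prop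
  rw [memLp_two_iff_integrable_sq hmeas.aestronglyMeasurable]
  have hint : Integrable (fun y : ℝ => ((1 : ℝ) + ‖y‖ ^ 2) ^ (-(2 * (s - α)) / 2)) volume :=
    integrable_rpow_neg_one_add_norm_sq (by simp; linarith)
  refine hint.mono' ?_ (Filter.Eventually.of_forall fun y => ?_)
  · exact (hmeas.pow_const 2).aestronglyMeasurable
  have hpos : (0 : ℝ) < 1 + y ^ 2 := by positivity
  have h1 : (|y| ^ α) ^ 2 = (y ^ 2) ^ α := by
    rw [← Real.rpow_natCast (|y| ^ α) 2, ← Real.rpow_mul (abs_nonneg _), ← sq_abs y,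
      ← Real.rpow_natCast |y| 2, ← Real.rpow_mul (abs_nonneg _)]
    push_cast; ring_nf
  have h2 : ((((1 + y ^ 2) ^ (s / 2) : ℝ))⁻¹) ^ 2 = (1 + y ^ 2) ^ (-s) := by
    rw [← Real.rpow_neg hpos.le, ← Real.rpow_natCast ((1 + y ^ 2) ^ (-(s / 2))) 2,
      ← Real.rpow_mul hpos.le]
    push_cast; ring_nf
  rw [Real.norm_eq_abs, abs_of_nonneg (by positivity), mul_pow, h1, h2]
  calc (y ^ 2) ^ α * (1 + y ^ 2) ^ (-s)
      ≤ (1 + y ^ 2) ^ α * (1 + y ^ 2) ^ (-s) :=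
        mul_le_mul_of_nonneg_right
          (Real.rpow_le_rpow (by positivity) (by linarith [sq_nonneg y]) hα0.le)
          (Real.rpow_nonneg hpos.le _)
    _ = (1 + y ^ 2) ^ (α - s) := by rw [← Real.rpow_add hpos]; ring_nf
    _ = (1 + ‖y‖ ^ 2) ^ (-(2 * (s - α)) / 2) := by
        rw [Real.norm_eq_abs, sq_abs]; congr 1; ring

/-- for s > 1/2 and α ∈ (0, min(1, s-1/2)), the Fourier transform of a
function in the weighted space L^{2,s}(ℝ) is locally α-Hölder continuous, with constant
proportional to the weighted L² norm. -/
theorem fourier_coefficient_holder (s α : ℝ) (hs : 1 / 2 < s)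
    (hα : 0 < α ∧ α < min 1 (s - 1 / 2)) :
    ∃ C > 0, ∀ h : ℝ → ℂ, Measurable h →
      MeasureTheory.MemLp (fun y : ℝ => ((1 + y ^ 2) ^ (s / 2) : ℝ) • h y) 2 volume →
      ∀ k k' : ℝ, |k - k'| ≤ 1 →
        ‖(∫ y : ℝ, Complex.exp (-Complex.I * (k : ℂ) * (y : ℂ)) * h y)
            - ∫ y : ℝ, Complex.exp (-Complex.I * (k' : ℂ) * (y : ℂ)) * h y‖ ≤
          C * (MeasureTheory.eLpNorm
            (fun y : ℝ => ((1 + y ^ 2) ^ (s / 2) : ℝ) • h y) 2 volume).toReal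
            * |k - k'| ^ α := by
  obtain ⟨hα0, hαm⟩ := hα
  have hα1 : α ≤ 1 := (lt_of_lt_of_le hαm (min_le_left _ _)).le
  have hαs : α < s - 1 / 2 := lt_of_lt_of_le hαm (min_le_right _ _)
  have hψL2 := psi_memL2 hα0 hαs
  have hwL2 := weight_memL2 hs
  set ψ : ℝ → ℝ := fun y => |y| ^ α * (((1 + y ^ 2) ^ (s / 2) : ℝ))⁻¹ with hψdef
  set K : ℝ := (∫ y : ℝ, ψ y ^ 2) ^ (1 / 2 : ℝ) with hKdef
  have hK0 : 0 ≤ K := Real.rpow_nonneg (integral_nonneg fun y => sq_nonneg _) _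
  refine ⟨2 * K + 1, by positivity, ?_⟩
  intro h hmeas hmem k k' hkk'
  have hWpos : ∀ y : ℝ, (0 : ℝ) < (1 + y ^ 2) ^ (s / 2) :=
    fun y => Real.rpow_pos_of_pos (by positivity) _
  set g : ℝ → ℂ := fun y : ℝ => ((1 + y ^ 2) ^ (s / 2) : ℝ) • h y with hgdef
  set N : ℝ := (eLpNorm g 2 volume).toReal with hNdef
  have hN0 : 0 ≤ N := ENNReal.toReal_nonneg
  have hpqr : (1 : ℝ≥0∞) / 1 = 1 / 2 + 1 / 2 := by
    rw [ENNReal.add_halves, one_div_one]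
  have hhg : (fun y : ℝ => (((1 + y ^ 2) ^ (s / 2) : ℝ))⁻¹ • g y) = h := by
    funext y
    show (((1 + y ^ 2) ^ (s / 2) : ℝ))⁻¹ • (((1 + y ^ 2) ^ (s / 2) : ℝ) • h y) = h y
    rw [smul_smul, inv_mul_cancel₀ (hWpos y).ne', one_smul]
  have hh1 : MemLp h 1 volume := by
    rw [← hhg]
    exact hmem.smul hwL2
  have hhint : Integrable h volume := memLp_one_iff_integrable.mp hh1
  have hexpint : ∀ t : ℝ,
      Integrable (fun y : ℝ => Complex.exp (-Complex.I * (t : ℂ) * (y : ℂ)) * h y) volume := by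
    intro t
    refine hhint.bdd_mul (c := 1) ?_ (Filter.Eventually.of_forall fun y => ?_)
    · exact (Complex.continuous_exp.comp (by continuity)).aestronglyMeasurable
    · rw [Complex.norm_exp]
      simp [Complex.mul_re]
  have hgnorm : ∀ y : ℝ, ‖h y‖ = (((1 + y ^ 2) ^ (s / 2) : ℝ))⁻¹ * ‖g y‖ := by
    intro y
    rw [hgdef]
    simp only [norm_smul, Real.norm_eq_abs, abs_of_pos (hWpos y)]
    rw [← mul_assoc, inv_mul_cancel₀ (hWpos y).ne', one_mul]
  have key : ∀ y : ℝ,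
      ‖Complex.exp (-Complex.I * (k : ℂ) * (y : ℂ)) * h y
        - Complex.exp (-Complex.I * (k' : ℂ) * (y : ℂ)) * h y‖
      ≤ (2 * |k - k'| ^ α) * (ψ y * ‖g y‖) := by
    intro y
    rw [← sub_mul, norm_mul]
    calc ‖Complex.exp (-Complex.I * (k : ℂ) * (y : ℂ))
          - Complex.exp (-Complex.I * (k' : ℂ) * (y : ℂ))‖ * ‖h y‖
        ≤ (2 * (|k - k'| * |y|) ^ α) * ((((1 + y ^ 2) ^ (s / 2) : ℝ))⁻¹ * ‖g y‖) := by
          rw [hgnorm y]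
          exact mul_le_mul_of_nonneg_right (exp_diff_bound hα0 hα1 k k' y)
            (mul_nonneg (inv_nonneg.mpr (hWpos y).le) (norm_nonneg _))
      _ = (2 * |k - k'| ^ α) * (ψ y * ‖g y‖) := by
          rw [Real.mul_rpow (abs_nonneg _) (abs_nonneg _), hψdef]
          ring
  -- integrability of the majorant
  have hψg1 : MemLp (fun y : ℝ => ψ y • ‖g y‖) 1 volume := hmem.norm.smul hψL2
  have hψgint : Integrable (fun y : ℝ => ψ y * ‖g y‖) volume := by
    have := memLp_one_iff_integrable.mp hψg1
    simpa [smul_eq_mul] using this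
  -- Cauchy-Schwarz
  have hψ0 : ∀ y : ℝ, 0 ≤ ψ y := fun y =>
    mul_nonneg (Real.rpow_nonneg (abs_nonneg _) _) (inv_nonneg.mpr (hWpos y).le)
  have hpq2 : (2 : ℝ).HolderConjugate 2 := Real.HolderConjugate.two_two
  have hofReal : ENNReal.ofReal (2 : ℝ) = 2 := by norm_num
  have hψ2 : MemLp ψ (ENNReal.ofReal 2) volume := by rw [hofReal]; exact hψL2
  have hg2 : MemLp (fun y : ℝ => ‖g y‖) (ENNReal.ofReal 2) volume := by
    rw [hofReal]; exact hmem.norm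
  have hCS := integral_mul_norm_le_Lp_mul_Lq (μ := volume) hpq2 hψ2 hg2
  have hCS' : ∫ y : ℝ, ψ y * ‖g y‖ ≤ K * N := by
    have e1 : ∫ y : ℝ, ‖ψ y‖ * ‖‖g y‖‖ = ∫ y : ℝ, ψ y * ‖g y‖ := by
      refine integral_congr_ae (Filter.Eventually.of_forall fun y => ?_)
      show ‖ψ y‖ * ‖‖g y‖‖ = ψ y * ‖g y‖
      rw [norm_norm, Real.norm_eq_abs, abs_of_nonneg (hψ0 y)]
    have e2 : (∫ y : ℝ, ‖ψ y‖ ^ (2 : ℝ)) ^ (1 / 2 : ℝ) = K := by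
      rw [hKdef]
      congr 1
      refine integral_congr_ae (Filter.Eventually.of_forall fun y => ?_)
      show ‖ψ y‖ ^ (2 : ℝ) = ψ y ^ 2
      rw [Real.norm_eq_abs, abs_of_nonneg (hψ0 y), ← Real.rpow_natCast (ψ y) 2]
      norm_num
    have e3 : (∫ y : ℝ, ‖‖g y‖‖ ^ (2 : ℝ)) ^ (1 / 2 : ℝ) = N := by
      have e3' : ∫ y : ℝ, ‖‖g y‖‖ ^ (2 : ℝ) = ∫ y : ℝ, ‖g y‖ ^ (2 : ℝ) := by
        refine integral_congr_ae (Filter.Eventually.of_forall fun y => ?_)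
        show ‖‖g y‖‖ ^ (2 : ℝ) = ‖g y‖ ^ (2 : ℝ)
        rw [norm_norm]
      rw [e3', hNdef, MemLp.eLpNorm_eq_integral_rpow_norm two_ne_zero ENNReal.ofNat_ne_top hmem,
        ENNReal.toReal_ofReal (by positivity)]
      norm_num
    calc ∫ y : ℝ, ψ y * ‖g y‖ = ∫ y : ℝ, ‖ψ y‖ * ‖‖g y‖‖ := e1.symm
      _ ≤ (∫ y : ℝ, ‖ψ y‖ ^ (2 : ℝ)) ^ (1 / 2 : ℝ)
          * (∫ y : ℝ, ‖‖g y‖‖ ^ (2 : ℝ)) ^ (1 / 2 : ℝ) := hCS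
      _ = K * N := by rw [e2, e3]
  have hΔ0 : (0 : ℝ) ≤ |k - k'| ^ α := Real.rpow_nonneg (abs_nonneg _) _
  calc ‖(∫ y : ℝ, Complex.exp (-Complex.I * (k : ℂ) * (y : ℂ)) * h y)
        - ∫ y : ℝ, Complex.exp (-Complex.I * (k' : ℂ) * (y : ℂ)) * h y‖
      = ‖∫ y : ℝ, (Complex.exp (-Complex.I * (k : ℂ) * (y : ℂ)) * h y
          - Complex.exp (-Complex.I * (k' : ℂ) * (y : ℂ)) * h y)‖ := by
        rw [integral_sub (hexpint k) (hexpint k')]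
    _ ≤ ∫ y : ℝ, ‖Complex.exp (-Complex.I * (k : ℂ) * (y : ℂ)) * h y
          - Complex.exp (-Complex.I * (k' : ℂ) * (y : ℂ)) * h y‖ :=
        norm_integral_le_integral_norm _
    _ ≤ ∫ y : ℝ, (2 * |k - k'| ^ α) * (ψ y * ‖g y‖) :=
        integral_mono ((hexpint k).sub (hexpint k')).norm (hψgint.const_mul _) key
    _ = (2 * |k - k'| ^ α) * ∫ y : ℝ, ψ y * ‖g y‖ := integral_const_mul _ _
    _ ≤ (2 * |k - k'| ^ α) * (K * N) :=
        mul_le_mul_of_nonneg_left hCS' (by positivity)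
    _ ≤ (2 * K + 1) * N * |k - k'| ^ α := by nlinarith [mul_nonneg hN0 hΔ0]
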